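/- arXiv:1907.04918 — 8 statements merged into one kernel-verified Lean document; each statement's English description precedes it below -/
import Mathlib

section
/- Let (X, ≼) be a preordered set and T, S : X → X. Define a relation ⊑ on the set V = {x ∈ X : T(x) ≼ S(x)} by v₁ ⊑ v₂ iff v₁ = v₂, or (v₁ ≺ v₂ and S(v₁) ≼ T(v₂)), where v₁ ≺ v₂ means v₁ ≼ v₂ and not v₂ ≼ v₁. Then ⊑ is a partial order on V (reflexive, antisymmetric, and transitive). -/
/-- The relation ⊑ defined by v₁ ⊑ v₂ iff v₁ = v₂ or (v₁ ≺ v₂ and S(v₁) ≼ T(v₂))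
is a partial order on V = {x : T(x) ≼ S(x)}: reflexive, antisymmetric, transitive. -/
theorem stmt_5 {X : Type*} [Preorder X] (T S : X → X) :
    let sq : X → X → Prop := fun v₁ v₂ => v₁ = v₂ ∨ (v₁ < v₂ ∧ S v₁ ≤ T v₂)
    (∀ v, T v ≤ S v → sq v v) ∧
      (∀ v₁ v₂, T v₁ ≤ S v₁ → T v₂ ≤ S v₂ → sq v₁ v₂ → sq v₂ v₁ → v₁ = v₂) ∧
      (∀ v₁ v₂ v₃, T v₁ ≤ S v₁ → T v₂ ≤ S v₂ → T v₃ ≤ S v₃ →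
        sq v₁ v₂ → sq v₂ v₃ → sq v₁ v₃) := by
  intro sq
  refine ⟨fun v _ => Or.inl rfl, ?_, ?_⟩
  · rintro v₁ v₂ _ _ (h | ⟨h12, _⟩) (h' | ⟨h21, _⟩)
    · exact h
    · exact h
    · exact h'.symm
    · exact absurd h21 (lt_asymm h12)
  · rintro v₁ v₂ v₃ _ h2 _ (h | ⟨h12, s12⟩) (h' | ⟨h23, s23⟩)
    · exact Or.inl (h.trans h')
    · subst h; exact Or.inr ⟨h23, s23⟩
    · subst h'; exact Or.inr ⟨h12, s12⟩
    · exact Or.inr ⟨lt_trans h12 h23, s12.trans (h2.trans s23)⟩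
end

section
/- Let (X, d, ≼) be a preordered s-regular b-metric space with coefficient s ≥ 1, and let T, S : X → X with T isotone. Suppose w ∈ X satisfies w ≼ T(w), and z ∈ X satisfies Sⁱ(z) ≼ S(w) ≼ T(w) for all i ∈ ℕ and d(Tⁱ(w), Sⁱ(z)) → 0 as i → ∞. Then T(w) = S(w). -/
/-- Limit step: in a preordered s-regular b-metric space, if T is isotone,
w ≼ T(w), Sⁱ(z) ≼ S(w) ≼ T(w) for all i ≥ 1 and d(Tⁱ(w),Sⁱ(z)) → 0,
then T(w) = S(w). -/
theorem stmt_8 {X : Type*} [Preorder X] (d : X → X → ℝ) (s : ℝ) (hs : 1 ≤ s)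
    (hd0 : ∀ x y, 0 ≤ d x y) (hdeq : ∀ x y, d x y = 0 ↔ x = y)
    (hdsymm : ∀ x y, d x y = d y x)
    (hdtri : ∀ x y z, d x y ≤ s * (d x z + d z y))
    (hreg : ∀ x y z : X, x ≤ y → y ≤ z → max (d x y) (d y z) ≤ s ^ 2 * d x z)
    (T S : X → X) (hT : ∀ x y, x ≤ y → T x ≤ T y)
    (w z : X) (hw : w ≤ T w)
    (hz : ∀ i : ℕ, 1 ≤ i → S^[i] z ≤ S w) (hSw : S w ≤ T w)
    (hlim : Filter.Tendsto (fun i : ℕ => d (T^[i] w) (S^[i] z))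
      Filter.atTop (nhds 0)) :
    T w = S w := by
  have hs0 : (0:ℝ) ≤ s := le_trans zero_le_one hs
  have hmono : Monotone (fun i : ℕ => T^[i] w) := by
    apply monotone_nat_of_le_succ
    intro n
    induction n with
    | zero => simpa using hw
    | succ k ih =>
      simp only [Function.iterate_succ_apply'] at *
      exact hT _ _ ih
  have key : ∀ i : ℕ, 1 ≤ i → d (T w) (S w) ≤ s^4 * d (T^[i] w) (S^[i] z) := by
    intro i hi
    have h1 : S^[i] z ≤ S w := hz i hi
    have h3 : T w ≤ T^[i] w := by
      have := hmono hi
      simpa using this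
    have r1 : d (S w) (T w) ≤ s^2 * d (S^[i] z) (T w) :=
      le_trans (le_max_right _ _) (hreg _ _ _ h1 hSw)
    have r2 : d (S^[i] z) (T w) ≤ s^2 * d (S^[i] z) (T^[i] w) :=
      le_trans (le_max_left _ _) (hreg _ _ _ (h1.trans hSw) h3)
    calc d (T w) (S w) = d (S w) (T w) := hdsymm _ _
      _ ≤ s^2 * d (S^[i] z) (T w) := r1
      _ ≤ s^2 * (s^2 * d (S^[i] z) (T^[i] w)) := by
          apply mul_le_mul_of_nonneg_left r2 (by positivity)
      _ = s^4 * d (T^[i] w) (S^[i] z) := by rw [hdsymm]; ring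
  have hlim' : Filter.Tendsto (fun i : ℕ => s^4 * d (T^[i] w) (S^[i] z))
      Filter.atTop (nhds 0) := by
    simpa using hlim.const_mul (s^4)
  have hle : d (T w) (S w) ≤ 0 :=
    ge_of_tendsto hlim' (Filter.eventually_atTop.2 ⟨1, key⟩)
  exact (hdeq _ _).1 (le_antisymm hle (hd0 _ _))
end

section
/- Theorem (coincidence points in preordered s-regular b-metric spaces): Let (X, d, ≼) be a preordered s-regular b-metric space, T, S : X → X, and x₀ ∈ X with T(x₀) ≼ S(x₀). Assume (i) T is isotone; (ii) S covers T on O_X(x₀) = {x : x ≼ x₀}; (iii) every chain C ∈ 𝒞(x₀, T, S, ≼) has a lower bound w ∈ X with w ≼ T(w), and there exists z ∈ X with Sⁱ(z) ≼ S(w) ≼ T(w) for all i ∈ ℕ and d(Tⁱ(w), Sⁱ(z)) → 0. Then Coin(T,S) ∩ O_X(x₀) is nonempty and contains a minimal element. -/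
/-- Coincidence theorem in preordered s-regular b-metric spaces:
Coin(T,S) ∩ O_X(x₀) is nonempty and contains a minimal element. -/
theorem stmt_10 {X : Type*} [Preorder X] (d : X → X → ℝ) (s : ℝ) (hs : 1 ≤ s)
    (hd0 : ∀ x y, 0 ≤ d x y) (hdeq : ∀ x y, d x y = 0 ↔ x = y)
    (hdsymm : ∀ x y, d x y = d y x)
    (hdtri : ∀ x y z, d x y ≤ s * (d x z + d z y))
    (hreg : ∀ x y z : X, x ≤ y → y ≤ z → max (d x y) (d y z) ≤ s ^ 2 * d x z)
    (T S : X → X) (x₀ : X) (h0 : T x₀ ≤ S x₀)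
    (hT : ∀ x y, x ≤ y → T x ≤ T y)
    (hcov : ∀ x, x ≤ x₀ → T x ≤ S x → ∃ y, y ≤ x ∧ S y = T x)
    (hchain : ∀ C : Set X, IsChain (· ≤ ·) C → C ⊆ {x | x ≤ x₀} →
      (∀ x ∈ C, T x ≤ S x) → (∀ x ∈ C, ∀ y ∈ C, x < y → S x ≤ T y) →
      S '' C ⊆ T '' {x | x ≤ x₀} →
      ∃ w, (∀ x ∈ C, w ≤ x) ∧ w ≤ T w ∧
        ∃ z, (∀ i : ℕ, 1 ≤ i → S^[i] z ≤ S w) ∧ S w ≤ T w ∧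
          Filter.Tendsto (fun i : ℕ => d (T^[i] w) (S^[i] z))
            Filter.atTop (nhds 0)) :
    ∃ w, T w = S w ∧ w ≤ x₀ ∧
      ∀ u, T u = S u → u ≤ x₀ → ¬ u < w := by
  -- the family of admissible chains
  set P : Set (Set X) := {C | IsChain (· ≤ ·) C ∧ C ⊆ {x | x ≤ x₀} ∧
      (∀ x ∈ C, T x ≤ S x) ∧ (∀ x ∈ C, ∀ y ∈ C, x < y → S x ≤ T y) ∧
      S '' C ⊆ T '' {x | x ≤ x₀}} with hP
  -- a first element x₁ with S x₁ = T x₀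
  obtain ⟨x₁, hx₁le, hx₁⟩ := hcov x₀ le_rfl h0
  have hx₁mem : ({x₁} : Set X) ∈ P := by
    refine ⟨Set.Subsingleton.isChain (Set.subsingleton_singleton), ?_, ?_, ?_, ?_⟩
    · intro x hx
      rw [Set.mem_singleton_iff] at hx
      rw [hx]; exact hx₁le
    · intro x hx
      rw [Set.mem_singleton_iff] at hx
      rw [hx, hx₁]
      exact hT _ _ hx₁le
    · intro x hx y hy hxy
      rw [Set.mem_singleton_iff] at hx hy
      exact absurd hxy (by rw [hx, hy]; exact lt_irrefl _)
    · intro v hv; rcases hv with ⟨x, hx, rfl⟩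
      rw [Set.mem_singleton_iff] at hx
      rw [hx, hx₁]
      exact ⟨x₀, le_rfl, rfl⟩
  -- Zorn: a maximal admissible chain containing x₁
  obtain ⟨Cm, hsubCm, hmax⟩ := zorn_subset_nonempty P (fun c hcP hc hcne => by
    refine ⟨⋃₀ c, ?_, fun A hA => Set.subset_sUnion_of_mem hA⟩
    refine ⟨?_, ?_, ?_, ?_, ?_⟩
    · intro x hx y hy hxy
      obtain ⟨A, hA, hxA⟩ := hx
      obtain ⟨B, hB, hyB⟩ := hy
      rcases hc.total hA hB with h | h
      · exact (hcP hB).1 (h hxA) hyB hxy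
      · exact (hcP hA).1 hxA (h hyB) hxy
    · intro x hx
      obtain ⟨A, hA, hxA⟩ := hx
      exact (hcP hA).2.1 hxA
    · intro x hx
      obtain ⟨A, hA, hxA⟩ := hx
      exact (hcP hA).2.2.1 x hxA
    · intro x hx y hy hxy
      obtain ⟨A, hA, hxA⟩ := hx
      obtain ⟨B, hB, hyB⟩ := hy
      rcases hc.total hA hB with h | h
      · exact (hcP hB).2.2.2.1 x (h hxA) y hyB hxy
      · exact (hcP hA).2.2.2.1 x hxA y (h hyB) hxy
    · intro v hv
      obtain ⟨x, ⟨A, hA, hxA⟩, rfl⟩ := hv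
      exact (hcP hA).2.2.2.2 ⟨x, hxA, rfl⟩) _ hx₁mem
  obtain ⟨hCchain, hCsub, hCTS, hCstrict, hCimg⟩ := hmax.1
  have hx₁Cm : x₁ ∈ Cm := hsubCm rfl
  -- apply the chain hypothesis
  obtain ⟨w, hwlb, hwTw, z, hSz, hSwTw, htend⟩ :=
    hchain Cm hCchain hCsub hCTS hCstrict hCimg
  have hs0 : (0:ℝ) ≤ s := le_trans zero_le_one hs
  -- T-iterates of w are monotone
  have hmono : Monotone (fun i : ℕ => T^[i] w) := by
    apply monotone_nat_of_le_succ
    intro n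
    induction n with
    | zero => simpa using hwTw
    | succ n ih =>
        rw [Function.iterate_succ_apply', Function.iterate_succ_apply']
        exact hT _ _ ih
  have hTwle : ∀ i : ℕ, 1 ≤ i → T w ≤ T^[i] w := by
    intro i hi
    have := hmono hi
    simpa using this
  -- coincidence: T w = S w
  have hkey : ∀ i : ℕ, 1 ≤ i →
      d (S w) (T w) ≤ (2 * s ^ 3) * d (T^[i] w) (S^[i] z) := by
    intro i hi
    have h1 : S^[i] z ≤ S w := hSz i hi
    have h3 : T w ≤ T^[i] w := hTwle i hi
    have e1 : d (S w) (T^[i] w) ≤ s ^ 2 * d (S^[i] z) (T^[i] w) :=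
      le_trans (le_max_right _ _) (hreg _ _ _ h1 (hSwTw.trans h3))
    have e2 : d (T w) (T^[i] w) ≤ s ^ 2 * d (S^[i] z) (T^[i] w) :=
      le_trans (le_max_right _ _) (hreg _ _ _ (h1.trans hSwTw) h3)
    have e3 : d (S w) (T w) ≤ s * (d (S w) (T^[i] w) + d (T^[i] w) (T w)) :=
      hdtri _ _ _
    have e4 : d (T^[i] w) (T w) = d (T w) (T^[i] w) := hdsymm _ _
    have e5 : d (T^[i] w) (S^[i] z) = d (S^[i] z) (T^[i] w) := hdsymm _ _
    calc d (S w) (T w) ≤ s * (d (S w) (T^[i] w) + d (T^[i] w) (T w)) := e3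
      _ = s * (d (S w) (T^[i] w) + d (T w) (T^[i] w)) := by rw [e4]
      _ ≤ s * (s ^ 2 * d (S^[i] z) (T^[i] w) + s ^ 2 * d (S^[i] z) (T^[i] w)) :=
          mul_le_mul_of_nonneg_left (add_le_add e1 e2) hs0
      _ = (2 * s ^ 3) * d (S^[i] z) (T^[i] w) := by ring
      _ = (2 * s ^ 3) * d (T^[i] w) (S^[i] z) := by rw [e5]
  have htend' : Filter.Tendsto (fun i : ℕ => (2 * s ^ 3) * d (T^[i] w) (S^[i] z))
      Filter.atTop (nhds 0) := by
    have := htend.const_mul (2 * s ^ 3)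
    simpa using this
  have hle0 : d (S w) (T w) ≤ 0 := by
    refine ge_of_tendsto htend' ?_
    filter_upwards [Filter.eventually_ge_atTop 1] with i hi
    exact hkey i hi
  have hco : S w = T w := (hdeq _ _).1 (le_antisymm hle0 (hd0 _ _))
  have hwx₀ : w ≤ x₀ := (hwlb x₁ hx₁Cm).trans hx₁le
  refine ⟨w, hco.symm, hwx₀, ?_⟩
  -- minimality
  intro u hu hux₀ huw
  have huCm : u ∉ Cm := fun h => absurd (lt_of_lt_of_le huw (hwlb u h)) (lt_irrefl u)
  have hule : ∀ x ∈ Cm, u ≤ x := fun x hx => (huw.le).trans (hwlb x hx)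
  have hins : insert u Cm ∈ P := by
    refine ⟨?_, ?_, ?_, ?_, ?_⟩
    · intro x hx y hy hxy
      rcases hx with rfl | hx
      · rcases hy with rfl | hy
        · exact absurd rfl hxy
        · exact Or.inl (hule y hy)
      · rcases hy with rfl | hy
        · exact Or.inr (hule x hx)
        · exact hCchain hx hy hxy
    · intro x hx
      rcases hx with rfl | hx
      · exact hux₀
      · exact hCsub hx
    · intro x hx
      rcases hx with rfl | hx
      · exact hu.le
      · exact hCTS x hx
    · intro x hx y hy hxy
      rcases hx with rfl | hx
      · rcases hy with rfl | hy
        · exact absurd hxy (lt_irrefl _)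
        · calc S x = T x := hu.symm
            _ ≤ T y := hT _ _ (hule y hy)
      · rcases hy with rfl | hy
        · exact absurd (lt_of_le_of_lt (hule x hx) hxy) (lt_irrefl _)
        · exact hCstrict x hx y hy hxy
    · intro v hv
      obtain ⟨x, hx, rfl⟩ := hv
      rcases hx with rfl | hx
      · exact ⟨x, hux₀, hu.symm ▸ rfl⟩
      · exact hCimg ⟨x, hx, rfl⟩
  have : insert u Cm ⊆ Cm := hmax.2 hins (Set.subset_insert _ _)
  exact huCm (this (Set.mem_insert _ _))
end

section
/- Dual coincidence theorem: Let (X, d, ≼) be a preordered s-regular b-metric space, T, S : X → X, and x₀ ∈ X with S(x₀) ≼ T(x₀). Assume T is isotone, S covers T from above on O_X*(x₀) = {x : x₀ ≼ x}, and every chain C ∈ 𝒞*(x₀, T, S, ≼) has an upper bound w with T(w) ≼ w, and there exists z ∈ X with T(w) ≼ S(w) ≼ Sⁱ(z) for all i ∈ ℕ and d(Tⁱ(w), Sⁱ(z)) → 0. Then Coin(T,S) ∩ O_X*(x₀) is nonempty and contains a maximal element. -/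
/-- Dual coincidence theorem: Coin(T,S) ∩ O_X*(x₀) is nonempty and contains a
maximal element. -/
theorem stmt_11 {X : Type*} [Preorder X] (d : X → X → ℝ) (s : ℝ) (hs : 1 ≤ s)
    (hd0 : ∀ x y, 0 ≤ d x y) (hdeq : ∀ x y, d x y = 0 ↔ x = y)
    (hdsymm : ∀ x y, d x y = d y x)
    (hdtri : ∀ x y z, d x y ≤ s * (d x z + d z y))
    (hreg : ∀ x y z : X, x ≤ y → y ≤ z → max (d x y) (d y z) ≤ s ^ 2 * d x z)
    (T S : X → X) (x₀ : X) (h0 : S x₀ ≤ T x₀)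
    (hT : ∀ x y, x ≤ y → T x ≤ T y)
    (hcov : ∀ x, x₀ ≤ x → S x ≤ T x → ∃ y, x ≤ y ∧ S y = T x)
    (hchain : ∀ C : Set X, IsChain (· ≤ ·) C → C ⊆ {x | x₀ ≤ x} →
      (∀ x ∈ C, S x ≤ T x) → (∀ x ∈ C, ∀ y ∈ C, x < y → T x ≤ S y) →
      S '' C ⊆ T '' {x | x₀ ≤ x} →
      ∃ w, (∀ x ∈ C, x ≤ w) ∧ T w ≤ w ∧
        ∃ z, (∀ i : ℕ, 1 ≤ i → S w ≤ S^[i] z) ∧ T w ≤ S w ∧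
          Filter.Tendsto (fun i : ℕ => d (T^[i] w) (S^[i] z))
            Filter.atTop (nhds 0)) :
    ∃ w, T w = S w ∧ x₀ ≤ w ∧
      ∀ u, T u = S u → x₀ ≤ u → ¬ w < u := by
  -- Key: any w with the listed properties is a coincidence point
  have key : ∀ w : X, T w ≤ w →
      ∀ z : X, (∀ i : ℕ, 1 ≤ i → S w ≤ S^[i] z) → T w ≤ S w →
      Filter.Tendsto (fun i : ℕ => d (T^[i] w) (S^[i] z)) Filter.atTop (nhds 0) →
      T w = S w := by
    intro w hw z hz1 hz2 hz3
    have hiter : ∀ n : ℕ, T^[n] w ≤ w := by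
      intro n
      induction n with
      | zero => simp
      | succ n ih =>
        rw [Function.iterate_succ_apply']
        exact le_trans (hT _ _ ih) hw
    have hTi : ∀ n : ℕ, T^[n + 1] w ≤ T w := by
      intro n
      rw [Function.iterate_succ_apply']
      exact hT _ _ (hiter n)
    have hs2 : (0 : ℝ) ≤ s ^ 2 := by positivity
    have hbound : ∀ n : ℕ,
        d (T w) (S w) ≤ s ^ 2 * (s ^ 2 * d (T^[n + 1] w) (S^[n + 1] z)) := by
      intro n
      have h2 : T w ≤ S^[n + 1] z := le_trans hz2 (hz1 (n + 1) (by omega))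
      have h3 : S w ≤ S^[n + 1] z := hz1 (n + 1) (by omega)
      have r1' : d (T w) (S^[n + 1] z) ≤ s ^ 2 * d (T^[n + 1] w) (S^[n + 1] z) :=
        le_trans (le_max_right _ _) (hreg _ _ _ (hTi n) h2)
      have r2' : d (T w) (S w) ≤ s ^ 2 * d (T w) (S^[n + 1] z) :=
        le_trans (le_max_left _ _) (hreg _ _ _ hz2 h3)
      exact le_trans r2' (mul_le_mul_of_nonneg_left r1' hs2)
    have h4 : Filter.Tendsto (fun n : ℕ => d (T^[n + 1] w) (S^[n + 1] z))
        Filter.atTop (nhds 0) := hz3.comp (Filter.tendsto_add_atTop_nat 1)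
    have htend : Filter.Tendsto
        (fun n : ℕ => s ^ 2 * (s ^ 2 * d (T^[n + 1] w) (S^[n + 1] z)))
        Filter.atTop (nhds 0) := by
      simpa using (h4.const_mul (s ^ 2)).const_mul (s ^ 2)
    have hle : d (T w) (S w) ≤ 0 := ge_of_tendsto' htend hbound
    exact (hdeq _ _).mp (le_antisymm hle (hd0 _ _))
  -- Base coincidence point above x₀
  obtain ⟨y₀, hy₀, hSy₀⟩ := hcov x₀ le_rfl h0
  have hSy₀T : S y₀ ≤ T y₀ := hSy₀ ▸ hT _ _ hy₀
  obtain ⟨w₀, hw₀ub, hw₀T, z₀, hz₀1, hz₀2, hz₀3⟩ :=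
    hchain {y₀} (Set.subsingleton_singleton.isChain)
      (by intro x hx; rw [Set.mem_singleton_iff] at hx; subst hx; exact hy₀)
      (by intro x hx; rw [Set.mem_singleton_iff] at hx; subst hx; exact hSy₀T)
      (by
        intro x hx y hy hxy
        rw [Set.mem_singleton_iff] at hx hy
        subst hx; subst hy; exact absurd hxy (lt_irrefl _))
      (by
        rintro _ ⟨x, hx, rfl⟩
        rw [Set.mem_singleton_iff] at hx; subst hx
        exact ⟨x₀, le_rfl, hSy₀.symm⟩)
  have hw₀coin : T w₀ = S w₀ := key w₀ hw₀T z₀ hz₀1 hz₀2 hz₀3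
  have hw₀0 : x₀ ≤ w₀ := le_trans hy₀ (hw₀ub y₀ rfl)
  -- Zorn on A = Coin(T,S) ∩ O*(x₀)
  have hZ : ∀ c ⊆ {x : X | T x = S x ∧ x₀ ≤ x}, IsChain (· ≤ ·) c →
      ∃ ub ∈ {x : X | T x = S x ∧ x₀ ≤ x}, ∀ y ∈ c, y ≤ ub := by
    intro c hcA hc
    rcases c.eq_empty_or_nonempty with rfl | ⟨a, ha⟩
    · exact ⟨w₀, ⟨hw₀coin, hw₀0⟩, by simp⟩
    · obtain ⟨w, hwub, hwT, z, hz1, hz2, hz3⟩ :=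
        hchain c hc
          (fun x hx => (hcA hx).2)
          (fun x hx => le_of_eq (hcA hx).1.symm)
          (fun x hx y hy hxy => by rw [← (hcA hy).1]; exact hT _ _ hxy.le)
          (by
            rintro _ ⟨x, hx, rfl⟩
            exact ⟨x, (hcA hx).2, (hcA hx).1⟩)
      exact ⟨w, ⟨key w hwT z hz1 hz2 hz3, le_trans (hcA ha).2 (hwub a ha)⟩, hwub⟩
  obtain ⟨m, hmA, hmax⟩ := zorn_le₀ {x : X | T x = S x ∧ x₀ ≤ x} hZ
  exact ⟨m, hmA.1, hmA.2, fun u hu hu0 hlt =>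
    (lt_iff_le_not_ge.mp hlt).2 (hmax ⟨hu, hu0⟩ (lt_iff_le_not_ge.mp hlt).1)⟩
end

section
/- Minimality step: In the setting of the coincidence theorem, suppose w ∈ Coin(T,S) ∩ O_X(x₀) is a lower bound of a maximal chain C ⊆ V (with respect to the order ⊑ defined by v₁ ⊑ v₂ iff v₁ = v₂ or (v₁ ≺ v₂ and S(v₁) ≼ T(v₂))), where V = {x ≼ x₀ : T(x) ≼ S(x), S(x) ∈ T(O_X(x₀))}, and T is isotone. Then there is no u ∈ Coin(T,S) ∩ O_X(x₀) with u ≺ w, i.e., w is minimal in Coin(T,S) ∩ O_X(x₀). -/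
/-- Minimality step: if w ∈ Coin(T,S) ∩ O_X(x₀) is a lower bound of a maximal
chain C in (V,⊑) and T is isotone, then w is minimal in Coin(T,S) ∩ O_X(x₀). -/
theorem stmt_12 {X : Type*} [Preorder X] (T S : X → X) (x₀ : X)
    (hT : ∀ x y, x ≤ y → T x ≤ T y)
    (sq : X → X → Prop)
    (hsq : ∀ v₁ v₂, sq v₁ v₂ ↔ v₁ = v₂ ∨ (v₁ < v₂ ∧ S v₁ ≤ T v₂))
    (V : Set X)
    (hV : V = {x | x ≤ x₀ ∧ T x ≤ S x ∧ S x ∈ T '' {y | y ≤ x₀}})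
    (C : Set X) (hCV : C ⊆ V) (hCchain : IsChain sq C)
    (hCmax : ∀ u ∈ V, (∀ x ∈ C, sq u x ∨ sq x u) → u ∈ C)
    (w : X) (hw : T w = S w) (hwx₀ : w ≤ x₀) (hlb : ∀ x ∈ C, w ≤ x) :
    ∀ u, T u = S u → u ≤ x₀ → ¬ u < w := by
  intro u hu hux₀ huw
  have huV : u ∈ V := by
    rw [hV]
    exact ⟨hux₀, hu.le, ⟨u, hux₀, hu⟩⟩
  have hcomp : ∀ x ∈ C, sq u x ∨ sq x u := by
    intro x hx
    left
    rw [hsq]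
    have hwx : w ≤ x := hlb x hx
    have hux : u < x := lt_of_lt_of_le huw hwx
    exact Or.inr ⟨hux, hu ▸ hT u x hux.le⟩
  have huC : u ∈ C := hCmax u huV hcomp
  exact absurd (hlb u huC) (not_le_of_gt huw)
end

section
/- Order homotopy transfer step: Let (X, d, ≼) be a preordered s-regular b-metric space, and H₀, H₁, K₀, K₁ : X → X with H₀ ≼ H₁ pointwise and K₁ ≼ K₀ pointwise. If x₀ ∈ Coin(H₀, K₀), then K₁(x₀) ≼ H₁(x₀). Consequently, if moreover K₁ is isotone, H₁ covers K₁ on O_X(x₀), and every chain C ∈ 𝒞(x₀, K₁, H₁, ≼) has a lower bound w with w ≼ K₁(w) together with z ∈ X satisfying H₁ⁱ(z) ≼ H₁(w) ≼ K₁(w) for all i and d(K₁ⁱ(w), H₁ⁱ(z)) → 0, then Coin(H₁, K₁) ∩ O_X(x₀) is nonempty with a minimal element. -/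
/-- Order homotopy transfer step: if H₀ ≼ H₁ and K₁ ≼ K₀ pointwise and
x₀ ∈ Coin(H₀,K₀), then K₁(x₀) ≼ H₁(x₀); consequently, under the covering and
chain conditions, Coin(H₁,K₁) ∩ O_X(x₀) is nonempty with a minimal element. -/
theorem stmt_14 {X : Type*} [Preorder X] (d : X → X → ℝ) (s : ℝ) (hs : 1 ≤ s)
    (hd0 : ∀ x y, 0 ≤ d x y) (hdeq : ∀ x y, d x y = 0 ↔ x = y)
    (hdsymm : ∀ x y, d x y = d y x)
    (hdtri : ∀ x y z, d x y ≤ s * (d x z + d z y))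
    (hreg : ∀ x y z : X, x ≤ y → y ≤ z → max (d x y) (d y z) ≤ s ^ 2 * d x z)
    (H₀ H₁ K₀ K₁ : X → X)
    (hH : ∀ x, H₀ x ≤ H₁ x) (hK : ∀ x, K₁ x ≤ K₀ x)
    (x₀ : X) (hx₀ : H₀ x₀ = K₀ x₀) :
    K₁ x₀ ≤ H₁ x₀ ∧
      ((∀ x y, x ≤ y → K₁ x ≤ K₁ y) →
        (∀ x, x ≤ x₀ → K₁ x ≤ H₁ x → ∃ y, y ≤ x ∧ H₁ y = K₁ x) →
        (∀ C : Set X, IsChain (· ≤ ·) C → C ⊆ {x | x ≤ x₀} →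
          (∀ x ∈ C, K₁ x ≤ H₁ x) → (∀ x ∈ C, ∀ y ∈ C, x < y → H₁ x ≤ K₁ y) →
          H₁ '' C ⊆ K₁ '' {x | x ≤ x₀} →
          ∃ w, (∀ x ∈ C, w ≤ x) ∧ w ≤ K₁ w ∧
            ∃ z, (∀ i : ℕ, 1 ≤ i → H₁^[i] z ≤ H₁ w) ∧ H₁ w ≤ K₁ w ∧
              Filter.Tendsto (fun i : ℕ => d (K₁^[i] w) (H₁^[i] z))
                Filter.atTop (nhds 0)) →
        ∃ w, H₁ w = K₁ w ∧ w ≤ x₀ ∧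
          ∀ u, H₁ u = K₁ u → u ≤ x₀ → ¬ u < w) := by
  have h1 : K₁ x₀ ≤ H₁ x₀ := by
    calc K₁ x₀ ≤ K₀ x₀ := hK x₀
    _ = H₀ x₀ := hx₀.symm
    _ ≤ H₁ x₀ := hH x₀
  refine ⟨h1, fun hmono hcov hchain => ?_⟩
  -- key step: any chain satisfying the hypotheses has a lower bound which
  -- is a coincidence point of H₁ and K₁.
  have key : ∀ C : Set X, IsChain (· ≤ ·) C → C ⊆ {x | x ≤ x₀} →
      (∀ x ∈ C, K₁ x ≤ H₁ x) → (∀ x ∈ C, ∀ y ∈ C, x < y → H₁ x ≤ K₁ y) →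
      H₁ '' C ⊆ K₁ '' {x | x ≤ x₀} →
      ∃ w, (∀ x ∈ C, w ≤ x) ∧ H₁ w = K₁ w := by
    intro C hC hC0 hC1 hC2 hC3
    obtain ⟨w, hw1, hw2, z, hz1, hz2, hz3⟩ := hchain C hC hC0 hC1 hC2 hC3
    refine ⟨w, hw1, ?_⟩
    have hKi : ∀ i : ℕ, K₁^[i] w ≤ K₁^[i+1] w := by
      intro i
      induction i with
      | zero => simpa using hw2
      | succ n ih =>
        rw [Function.iterate_succ_apply', Function.iterate_succ_apply']
        exact hmono _ _ ih
    have hKi' : ∀ i : ℕ, 1 ≤ i → K₁ w ≤ K₁^[i] w := by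
      intro i hi
      induction i with
      | zero => omega
      | succ n ih =>
        rcases Nat.lt_or_ge n 1 with h | h
        · interval_cases n
          · simp
        · exact le_trans (ih h) (hKi n)
    have hs0 : (0:ℝ) < s := lt_of_lt_of_le one_pos hs
    have hbound : ∀ i : ℕ, 1 ≤ i →
        d (H₁ w) (K₁ w) ≤ s ^ 2 * (s ^ 2 * d (K₁^[i] w) (H₁^[i] z)) := by
      intro i hi
      have hle1 : H₁^[i] z ≤ H₁ w := hz1 i hi
      have hle2 : H₁ w ≤ K₁^[i] w := le_trans hz2 (hKi' i hi)
      have h4 := hreg (H₁^[i] z) (H₁ w) (K₁^[i] w) hle1 hle2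
      have h5 : d (H₁ w) (K₁^[i] w) ≤ s ^ 2 * d (K₁^[i] w) (H₁^[i] z) := by
        calc d (H₁ w) (K₁^[i] w) ≤ s ^ 2 * d (H₁^[i] z) (K₁^[i] w) :=
              le_trans (le_max_right _ _) h4
          _ = s ^ 2 * d (K₁^[i] w) (H₁^[i] z) := by rw [hdsymm]
      have h6 := hreg (H₁ w) (K₁ w) (K₁^[i] w) hz2 (hKi' i hi)
      calc d (H₁ w) (K₁ w) ≤ s ^ 2 * d (H₁ w) (K₁^[i] w) :=
            le_trans (le_max_left _ _) h6
        _ ≤ s ^ 2 * (s ^ 2 * d (K₁^[i] w) (H₁^[i] z)) := by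
            apply mul_le_mul_of_nonneg_left h5 (by positivity)
    have htend : Filter.Tendsto
        (fun i : ℕ => s ^ 2 * (s ^ 2 * d (K₁^[i] w) (H₁^[i] z)))
        Filter.atTop (nhds 0) := by
      have := (hz3.const_mul (s ^ 2)).const_mul (s ^ 2)
      simpa using this
    have hle0 : d (H₁ w) (K₁ w) ≤ 0 := by
      refine ge_of_tendsto htend ?_
      filter_upwards [Filter.eventually_ge_atTop 1] with i hi
      exact hbound i hi
    exact (hdeq _ _).mp (le_antisymm hle0 (hd0 _ _))
  -- produce one coincidence point below x₀
  obtain ⟨x₁, hx₁le, hx₁eq⟩ := hcov x₀ le_rfl h1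
  have hsingle : ∃ w, w ≤ x₁ ∧ H₁ w = K₁ w := by
    obtain ⟨w, hw1, hw2⟩ := key {x₁} (Set.subsingleton_singleton.isChain)
      (by intro x hx; simp only [Set.mem_singleton_iff] at hx; subst hx; exact hx₁le)
      (by intro x hx; simp only [Set.mem_singleton_iff] at hx; subst hx
          rw [hx₁eq]; exact hmono _ _ hx₁le)
      (by intro x hx y hy hxy
          simp only [Set.mem_singleton_iff] at hx hy; subst hx; subst hy
          exact absurd hxy (lt_irrefl _))
      (by rintro _ ⟨x, hx, rfl⟩; simp only [Set.mem_singleton_iff] at hx; subst hx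
          exact ⟨x₀, le_rfl, hx₁eq.symm⟩)
    exact ⟨w, hw1 x₁ rfl, hw2⟩
  obtain ⟨w₀, hw₀le, hw₀eq⟩ := hsingle
  -- the set of coincidence points below x₀
  set A : Set X := {x | H₁ x = K₁ x ∧ x ≤ x₀} with hA
  have hw₀A : w₀ ∈ A := ⟨hw₀eq, le_trans hw₀le hx₁le⟩
  -- every nonempty chain in A has a lower bound in A
  have hbdd : ∀ c : Set X, c ⊆ A → IsChain (· ≤ ·) c → c.Nonempty →
      ∃ lb ∈ A, ∀ x ∈ c, lb ≤ x := by
    intro c hcA hcchain ⟨y, hy⟩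
    obtain ⟨w, hw1, hw2⟩ := key c hcchain
      (fun x hx => (hcA hx).2)
      (fun x hx => le_of_eq (hcA hx).1.symm)
      (fun x hx y' hy' hxy => by
        rw [(hcA hx).1]; exact hmono _ _ hxy.le)
      (by rintro _ ⟨x, hx, rfl⟩; exact ⟨x, (hcA hx).2, ((hcA hx).1).symm⟩)
    exact ⟨w, ⟨hw2, le_trans (hw1 y hy) (hcA hy).2⟩, hw1⟩
  -- Zorn's lemma (dual form) on the subtype A
  have hzorn : ∃ m : A, ∀ a : A, (a : X) ≤ m → (m : X) ≤ a := by
    obtain ⟨m, hm⟩ := exists_maximal_of_chains_bounded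
      (r := fun a b : A => (b : X) ≤ (a : X))
      (fun c hc => by
        by_cases hne : c.Nonempty
        · obtain ⟨lb, hlbA, hlb⟩ := hbdd (Subtype.val '' c)
            (by rintro _ ⟨a, _, rfl⟩; exact a.2)
            (by rintro _ ⟨a, ha, rfl⟩ _ ⟨b, hb, rfl⟩ hab
                rcases hc ha hb (fun h => hab (congrArg _ h)) with h | h
                · exact Or.inr h
                · exact Or.inl h)
            (by obtain ⟨a, ha⟩ := hne; exact ⟨a, a, ha, rfl⟩)
          exact ⟨⟨lb, hlbA⟩, fun a ha => hlb a ⟨a, ha, rfl⟩⟩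
        · exact ⟨⟨w₀, hw₀A⟩, fun a ha => absurd ⟨a, ha⟩ hne⟩)
      (fun hab hbc => le_trans hbc hab)
    exact ⟨m, fun a ha => hm a ha⟩
  obtain ⟨⟨m, hmeq, hmle⟩, hmmin⟩ := hzorn
  refine ⟨m, hmeq, hmle, fun u hueq hule hlt => ?_⟩
  exact hlt.not_ge (hmmin ⟨u, hueq, hule⟩ hlt.le)
end

section
/- Common fixed point limit step: Let (X, d, ≼) be a preordered s-regular b-metric space and ℱ = {f_α}_{α∈I} a family of self-maps with w ∈ X such that f_α(w) ≼ w and f_αⁱ(w) ≼ f_α(w) for all i ∈ ℕ and all α. If there exist z ∈ X and β ∈ I with f_α(w) ≼ w ≼ f_βⁱ(z) for all i, and d(f_αⁱ(w), f_βⁱ(z)) → 0 as i → ∞, then f_α(w) = w, and the key estimate d(f_α(w), w) ≤ 2s³·d(f_αⁱ(w), f_βⁱ(z)) holds for all i. -/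
/-- Common fixed point limit step: under f_α(w) ≼ w, f_αⁱ(w) ≼ f_α(w),
w ≼ f_βⁱ(z) and d(f_αⁱ(w), f_βⁱ(z)) → 0, we get f_α(w) = w and the estimate
d(f_α(w), w) ≤ 2s³·d(f_αⁱ(w), f_βⁱ(z)). -/
theorem stmt_16 {X : Type*} [Preorder X] {I : Type*} (d : X → X → ℝ)
    (s : ℝ) (hs : 1 ≤ s)
    (hd0 : ∀ x y, 0 ≤ d x y) (hdeq : ∀ x y, d x y = 0 ↔ x = y)
    (hdsymm : ∀ x y, d x y = d y x)
    (hdtri : ∀ x y z, d x y ≤ s * (d x z + d z y))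
    (hreg : ∀ x y z : X, x ≤ y → y ≤ z → max (d x y) (d y z) ≤ s ^ 2 * d x z)
    (f : I → X → X) (w z : X) (β : I)
    (hw : ∀ α, f α w ≤ w)
    (hiter : ∀ (α : I) (i : ℕ), 1 ≤ i → (f α)^[i] w ≤ f α w)
    (hz : ∀ i : ℕ, 1 ≤ i → w ≤ (f β)^[i] z)
    (hlim : ∀ α : I, Filter.Tendsto (fun i : ℕ => d ((f α)^[i] w) ((f β)^[i] z))
      Filter.atTop (nhds 0)) :
    (∀ α, f α w = w) ∧
      ∀ (α : I) (i : ℕ), 1 ≤ i →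
        d (f α w) w ≤ 2 * s ^ 3 * d ((f α)^[i] w) ((f β)^[i] z) := by

  have key : ∀ (α : I) (i : ℕ), 1 ≤ i →
      d (f α w) w ≤ 2 * s ^ 3 * d ((f α)^[i] w) ((f β)^[i] z) := by
    intro α i hi
    set D := d ((f α)^[i] w) ((f β)^[i] z) with hD
    have h1 : (f α)^[i] w ≤ f α w := hiter α i hi
    have h2 : f α w ≤ (f β)^[i] z := le_trans (hw α) (hz i hi)
    have h3 : (f α)^[i] w ≤ w := le_trans h1 (hw α)
    have hA : d (f α w) ((f β)^[i] z) ≤ s ^ 2 * D :=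
      le_trans (le_max_right _ _) (hreg _ _ _ h1 h2)
    have hB : d w ((f β)^[i] z) ≤ s ^ 2 * D :=
      le_trans (le_max_right _ _) (hreg _ _ _ h3 (hz i hi))
    have htri := hdtri (f α w) w ((f β)^[i] z)
    have hsym : d ((f β)^[i] z) w = d w ((f β)^[i] z) := hdsymm _ _
    have hs0 : 0 ≤ s := le_trans zero_le_one hs
    calc d (f α w) w ≤ s * (d (f α w) ((f β)^[i] z) + d ((f β)^[i] z) w) := htri
      _ ≤ s * (s ^ 2 * D + s ^ 2 * D) := by
          rw [hsym]; exact mul_le_mul_of_nonneg_left (add_le_add hA hB) hs0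
      _ = 2 * s ^ 3 * D := by ring
  refine ⟨fun α => ?_, key⟩
  have hle : d (f α w) w ≤ 0 := by
    have h2 : Filter.Tendsto (fun i : ℕ => 2 * s ^ 3 * d ((f α)^[i] w) ((f β)^[i] z))
        Filter.atTop (nhds 0) := by
      have := (hlim α).const_mul (2 * s ^ 3)
      simpa using this
    refine le_of_tendsto_of_tendsto tendsto_const_nhds h2 ?_
    filter_upwards [Filter.eventually_ge_atTop 1] with i hi
    exact key α i hi
  exact (hdeq _ _).mp (le_antisymm hle (hd0 _ _))
end

section
/- Common fixed point theorem: Let (X, d, ≼) be a preordered s-regular b-metric space, x₀ ∈ X, and ℱ = {f_α}_{α∈I} a concordantly isotone family with f_α(x₀) ≼ x₀ for all α. Suppose for every chain C ∈ 𝒞₁(x₀, ℱ, ≼) there exists w ∈ X which is a common lower bound of all chains f_α(C), and there exist z ∈ X and β ∈ I with f_α(w) ≼ w ≼ f_βⁱ(z) for all i ∈ ℕ and all α, and d(f_αⁱ(w), f_βⁱ(z)) → 0. Then ComFix(ℱ) ∩ O_X(x₀) is nonempty and contains a minimal element. -/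
/-- Common fixed point theorem: for a concordantly isotone family ℱ with
f_α(x₀) ≼ x₀ and the chain/lower-bound/limit condition, ComFix(ℱ) ∩ O_X(x₀)
is nonempty and contains a minimal element. -/
theorem stmt_17 {X : Type*} [Preorder X] {I : Type*} [Nonempty I]
    (d : X → X → ℝ) (s : ℝ) (hs : 1 ≤ s)
    (hd0 : ∀ x y, 0 ≤ d x y) (hdeq : ∀ x y, d x y = 0 ↔ x = y)
    (hdsymm : ∀ x y, d x y = d y x)
    (hdtri : ∀ x y z, d x y ≤ s * (d x z + d z y))
    (hreg : ∀ x y z : X, x ≤ y → y ≤ z → max (d x y) (d y z) ≤ s ^ 2 * d x z)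
    (f : I → X → X) (x₀ : X)
    (hiso : ∀ (x y : X), x < y → ∀ α β, f α x ≤ f β y)
    (hx₀ : ∀ α, f α x₀ ≤ x₀)
    (hchain : ∀ C : Set X, IsChain (· ≤ ·) C →
      C ⊆ {x | x ≤ x₀} → C ⊆ ⋃ α, f α '' {x | x ≤ x₀} →
      (∀ x ∈ C, ∀ α, f α x ≤ x) →
      (∀ x ∈ C, ∀ y ∈ C, x < y → ∀ α, x ≤ f α y) →
      ∃ w, (∀ α, ∀ x ∈ C, w ≤ f α x) ∧
        ∃ z β, (∀ α, f α w ≤ w) ∧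
          (∀ i : ℕ, 1 ≤ i → w ≤ (f β)^[i] z) ∧
          ∀ α, Filter.Tendsto (fun i : ℕ => d ((f α)^[i] w) ((f β)^[i] z))
            Filter.atTop (nhds 0)) :
    ∃ w, (∀ α, f α w = w) ∧ w ≤ x₀ ∧
      ∀ u, (∀ α, f α u = u) → u ≤ x₀ → ¬ u < w := by
  classical
  have hs0 : (0:ℝ) ≤ s := le_trans zero_le_one hs
  -- regularity forces antisymmetry
  have antisymm : ∀ x y : X, x ≤ y → y ≤ x → x = y := by
    intro x y h1 h2
    have h := hreg x y x h1 h2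
    rw [(hdeq x x).2 rfl, mul_zero] at h
    exact (hdeq x y).1 (le_antisymm (le_trans (le_max_left _ _) h) (hd0 _ _))
  have lt_or_eq' : ∀ x y : X, x ≤ y → x < y ∨ x = y := by
    intro x y h
    by_cases h' : y ≤ x
    · exact Or.inr (antisymm x y h h')
    · exact Or.inl (lt_of_le_not_ge h h')
  -- non-strict monotonicity of each f α
  have mono : ∀ α (x y : X), x ≤ y → f α x ≤ f α y := by
    intro α x y h
    rcases lt_or_eq' x y h with h | rfl
    · exact hiso _ _ h α α
    · exact le_rfl
  -- iterates stay below a point with f α x ≤ x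
  have iter_le : ∀ α (x : X), f α x ≤ x → ∀ i, (f α)^[i] x ≤ x := by
    intro α x hx i
    induction i generalizing x with
    | zero => simp
    | succ n ih =>
      rw [Function.iterate_succ_apply]
      exact le_trans (ih _ (mono α _ _ hx)) hx
  -- the w produced by hchain is a common fixed point
  have fix : ∀ (w z : X) (β : I), (∀ α, f α w ≤ w) →
      (∀ i : ℕ, 1 ≤ i → w ≤ (f β)^[i] z) →
      (∀ α, Filter.Tendsto (fun i : ℕ => d ((f α)^[i] w) ((f β)^[i] z))
        Filter.atTop (nhds 0)) →
      ∀ α, f α w = w := by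
    intro w z β hfw hwz hlim α
    have key : ∀ i : ℕ, 1 ≤ i →
        d (f α w) w ≤ s ^ 4 * d ((f α)^[i] w) ((f β)^[i] z) := by
      intro i hi
      obtain ⟨j, rfl⟩ : ∃ j, i = j + 1 := ⟨i - 1, by omega⟩
      have hle : (f α)^[j+1] w ≤ f α w := by
        rw [Function.iterate_succ_apply]
        exact iter_le α (f α w) (mono α _ _ (hfw α)) j
      have h1 : d ((f α)^[j+1] w) w ≤ s ^ 2 * d ((f α)^[j+1] w) ((f β)^[j+1] z) :=
        le_trans (le_max_left _ _) (hreg _ _ _ (hle.trans (hfw α)) (hwz _ hi))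
      have h2 : d (f α w) w ≤ s ^ 2 * d ((f α)^[j+1] w) w :=
        le_trans (le_max_right _ _) (hreg _ _ _ hle (hfw α))
      calc d (f α w) w ≤ s ^ 2 * d ((f α)^[j+1] w) w := h2
        _ ≤ s ^ 2 * (s ^ 2 * d ((f α)^[j+1] w) ((f β)^[j+1] z)) :=
            mul_le_mul_of_nonneg_left h1 (by positivity)
        _ = s ^ 4 * d ((f α)^[j+1] w) ((f β)^[j+1] z) := by ring
    have hlim' : Filter.Tendsto
        (fun i : ℕ => s ^ 4 * d ((f α)^[i] w) ((f β)^[i] z))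
        Filter.atTop (nhds 0) := by
      simpa using (hlim α).const_mul (s ^ 4)
    have hle0 : d (f α w) w ≤ 0 := by
      refine ge_of_tendsto hlim' ?_
      filter_upwards [Filter.eventually_ge_atTop 1] with i hi
      exact key i hi
    exact (hdeq _ _).1 (le_antisymm hle0 (hd0 _ _))
  obtain ⟨α₀⟩ := ‹Nonempty I›
  -- auxiliary: f α (f α₀ x₀) ≤ f α₀ x₀
  have step : ∀ α, f α (f α₀ x₀) ≤ f α₀ x₀ := by
    intro α
    rcases lt_or_eq' _ _ (hx₀ α₀) with h | h
    · exact hiso _ _ h α α₀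
    · rw [h]; exact h ▸ hx₀ α
  -- construct a first common fixed point below x₀ using the singleton chain
  have hC₀ := hchain {f α₀ x₀}
    (by intro x hx y hy hne
        rw [Set.mem_singleton_iff] at hx hy
        exact absurd (hx.trans hy.symm) hne)
    (by intro x hx; rw [Set.mem_singleton_iff] at hx; subst hx; exact hx₀ α₀)
    (by
      intro x hx; rw [Set.mem_singleton_iff] at hx; subst hx
      exact Set.mem_iUnion.2 ⟨α₀, ⟨x₀, le_rfl, rfl⟩⟩)
    (by
      intro x hx α; rw [Set.mem_singleton_iff] at hx; subst hx
      exact step α)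
    (by
      intro x hx y hy hxy
      rw [Set.mem_singleton_iff] at hx hy
      subst hx; subst hy; exact absurd hxy (lt_irrefl _))
  obtain ⟨w₀, hw₀lb, z₀, β₀, hw₀f, hw₀z, hw₀lim⟩ := hC₀
  have hw₀fix : ∀ α, f α w₀ = w₀ := fix w₀ z₀ β₀ hw₀f hw₀z hw₀lim
  have hw₀le : w₀ ≤ x₀ :=
    le_trans (le_trans (hw₀lb α₀ _ rfl) (step α₀)) (hx₀ α₀)
  -- Zorn's lemma (dualized) on the set of common fixed points below x₀
  have hzorn : ∀ c : Set Xᵒᵈ,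
      c ⊆ (show Set Xᵒᵈ from {x : X | (∀ α, f α x = x) ∧ x ≤ x₀}) →
      IsChain (· ≤ ·) c →
      ∃ ub ∈ (show Set Xᵒᵈ from {x : X | (∀ α, f α x = x) ∧ x ≤ x₀}),
        ∀ y ∈ c, y ≤ ub := by
    intro c hcS hc
    rcases Set.eq_empty_or_nonempty c with rfl | ⟨x₁, hx₁⟩
    · exact ⟨OrderDual.toDual w₀, ⟨hw₀fix, hw₀le⟩, by simp⟩
    · have hc' : IsChain (fun a b : X => a ≤ b) (show Set X from c) := by
        intro x hx y hy hne
        exact (hc hx hy hne).symm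
      obtain ⟨w, hwlb, z, β, hwf, hwz, hwlim⟩ := hchain (show Set X from c) hc'
        (fun x hx => (hcS hx).2)
        (fun x hx => Set.mem_iUnion.2 ⟨α₀, ⟨x, (hcS hx).2, (hcS hx).1 α₀⟩⟩)
        (fun x hx α => ((hcS hx).1 α).le)
        (fun x hx y hy hxy α => le_of_lt (((hcS hy).1 α).symm ▸ hxy))
      have hwfix : ∀ α, f α w = w := fix w z β hwf hwz hwlim
      have hwle : ∀ y ∈ (show Set X from c), w ≤ y := fun y hy =>
        ((hcS hy).1 α₀) ▸ hwlb α₀ y hy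
      exact ⟨OrderDual.toDual w,
        ⟨hwfix, le_trans (hwle x₁ hx₁) (hcS hx₁).2⟩,
        fun y hy => hwle y hy⟩
  obtain ⟨m, hm⟩ := zorn_le₀ (α := Xᵒᵈ)
    (show Set Xᵒᵈ from {x : X | (∀ α, f α x = x) ∧ x ≤ x₀}) hzorn
  refine ⟨OrderDual.ofDual m, hm.1.1, hm.1.2, fun u hu hux₀ hlt => ?_⟩
  have hmu : (OrderDual.ofDual m : X) ≤ u :=
    hm.2 (y := OrderDual.toDual u) ⟨hu, hux₀⟩ hlt.le
  exact hlt.not_ge hmu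
end
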